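/- ∫₀¹ K(k)/(1+k) dk = π²/8, where K is the complete elliptic integral of the first kind. -/

import Mathlib

open Real MeasureTheory intervalIntegral Set


lemma L1 : IntervalIntegrable (fun x : ℝ => 1 / Real.sqrt (1 - x^2)) volume 0 1 := by
  have hbase : IntervalIntegrable (fun x : ℝ => x ^ (-(1/2) : ℝ)) volume 0 1 :=
    intervalIntegral.intervalIntegrable_rpow' (by norm_num)
  have hg : IntervalIntegrable (fun x : ℝ => (1 - x) ^ (-(1/2) : ℝ)) volume 0 1 := by
    have := (hbase.comp_sub_left 1).symm
    simpa using this
  refine hg.mono_fun ?_ ?_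
  · apply Measurable.aestronglyMeasurable
    simp only [one_div]
    exact ((continuous_const.sub (continuous_pow 2)).sqrt.measurable).inv
  · rw [Filter.EventuallyLE, ae_restrict_iff' measurableSet_uIoc]
    refine Filter.Eventually.of_forall (fun x hx => ?_)
    rw [Set.uIoc_of_le (by norm_num : (0:ℝ) ≤ 1)] at hx
    have h0 : 0 < x := hx.1
    have h1 : x ≤ 1 := hx.2
    have hx2 : 0 ≤ 1 - x^2 := by nlinarith
    have hx1 : 0 ≤ 1 - x := by linarith
    rw [Real.norm_eq_abs, Real.norm_eq_abs, abs_of_nonneg (by positivity),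
      abs_of_nonneg (Real.rpow_nonneg hx1 _), Real.rpow_neg hx1, ← Real.sqrt_eq_rpow, one_div]
    rcases eq_or_lt_of_le h1 with rfl | hlt
    · norm_num
    · have hs : 0 < Real.sqrt (1 - x) := Real.sqrt_pos.2 (by linarith)
      apply inv_anti₀ hs
      apply Real.sqrt_le_sqrt
      nlinarith


lemma aux_pos (t k : ℝ) (ht0 : 0 ≤ t) (ht1 : t < 1) (hk0 : 0 ≤ k) (hk1 : k ≤ 1) :
    0 < 1 - t^2*k^2 := by
  have hk2 : k^2 ≤ 1 := by nlinarith
  have ht2 : t^2 < 1 := by nlinarith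
  nlinarith [mul_le_mul_of_nonneg_left hk2 (sq_nonneg t)]

lemma lemA (t : ℝ) (ht0 : 0 ≤ t) (ht1 : t < 1) :
    ∫ k in (0:ℝ)..1, 1/((1+k) * Real.sqrt (1 - t^2*k^2))
      = Real.log (1 + Real.sqrt (1-t^2)) / Real.sqrt (1-t^2) := by
  set c := Real.sqrt (1-t^2) with hc_def
  have ht2 : 0 < 1 - t^2 := by nlinarith
  have hc : 0 < c := Real.sqrt_pos.2 ht2
  have hc2 : c^2 = 1 - t^2 := Real.sq_sqrt ht2.le
  have key : ∀ k ∈ Set.uIcc (0:ℝ) 1,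
      HasDerivAt (fun k => (1/c) * (Real.log (1+k)
        - Real.log (1 + t^2*k + c * Real.sqrt (1 - t^2*k^2))))
        (1/((1+k) * Real.sqrt (1 - t^2*k^2))) k := by
    intro k hk
    rw [Set.uIcc_of_le (by norm_num : (0:ℝ) ≤ 1)] at hk
    obtain ⟨hk0, hk1⟩ := hk
    have hin : 0 < 1 - t^2*k^2 := aux_pos t k ht0 ht1 hk0 hk1
    set s := Real.sqrt (1 - t^2*k^2) with hs_def
    have hs : 0 < s := Real.sqrt_pos.2 hin
    have hs2 : s^2 = 1 - t^2*k^2 := Real.sq_sqrt hin.le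
    have hD : 0 < 1 + t^2*k + c * s := by positivity
    have h1 : HasDerivAt (fun k : ℝ => 1 - t^2*k^2) (-(t^2*(2*k))) k := by
      simpa using ((hasDerivAt_pow 2 k).const_mul (t^2)).const_sub 1
    have hsq : HasDerivAt (fun k : ℝ => Real.sqrt (1 - t^2*k^2)) (-(t^2*k)/s) k := by
      have := (Real.hasDerivAt_sqrt hin.ne').comp k h1
      refine this.congr_deriv (Eq.symm ?_)
      field_simp
      ring
    have hin2 : HasDerivAt (fun k : ℝ => 1 + t^2*k + c * Real.sqrt (1 - t^2*k^2))
        (t^2 + c * (-(t^2*k)/s)) k := by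
      have ha : HasDerivAt (fun k : ℝ => 1 + t^2*k) (t^2) k := by
        simpa using ((hasDerivAt_id k).const_mul (t^2)).const_add 1
      exact ha.add (hsq.const_mul c)
    have hlogD := (Real.hasDerivAt_log hD.ne').comp k hin2
    have hlog1 : HasDerivAt (fun k : ℝ => Real.log (1+k)) (1/(1+k)) k := by
      have ha : HasDerivAt (fun k : ℝ => 1 + k) 1 k := by
        simpa using (hasDerivAt_id k).const_add 1
      have := (Real.hasDerivAt_log (by linarith : 1 + k ≠ 0)).comp k ha
      exact this.congr_deriv (by simp)
    have := (hlog1.sub hlogD).const_mul (1/c)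
    refine this.congr_deriv (Eq.symm ?_)
    field_simp
    linear_combination s*hc2 - c*hs2
  have hint : IntervalIntegrable (fun k => 1/((1+k) * Real.sqrt (1 - t^2*k^2))) volume 0 1 := by
    apply ContinuousOn.intervalIntegrable
    apply ContinuousOn.div continuousOn_const
    · apply ContinuousOn.mul
      · exact (continuous_const.add continuous_id).continuousOn
      · exact ((continuous_const.sub (continuous_const.mul (continuous_pow 2))).sqrt).continuousOn
    · intro k hk
      rw [Set.uIcc_of_le (by norm_num : (0:ℝ) ≤ 1)] at hk
      have hin : 0 < 1 - t^2*k^2 := aux_pos t k ht0 ht1 hk.1 hk.2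
      have : 0 < Real.sqrt (1 - t^2*k^2) := Real.sqrt_pos.2 hin
      nlinarith [hk.1]
  rw [intervalIntegral.integral_eq_sub_of_hasDerivAt key hint]
  have e1 : Real.sqrt (1 - t^2*1^2) = c := by norm_num [hc_def]
  have e3 : Real.sqrt (1 - t^2*0^2) = 1 := by norm_num
  rw [e1, e3]
  have e2 : 1 + t^2*1 + c*c = 2 := by nlinarith [hc2]
  rw [e2]
  norm_num
  field_simp


lemma lemB (c : ℝ) (hc : 0 < c) :
    ∫ a in (0:ℝ)..1, 1/(1 + a*c) = Real.log (1 + c) / c := by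
  have key : ∀ a ∈ Set.uIcc (0:ℝ) 1,
      HasDerivAt (fun a => Real.log (1 + a*c) / c) (1/(1 + a*c)) a := by
    intro a ha
    rw [Set.uIcc_of_le (by norm_num : (0:ℝ) ≤ 1)] at ha
    have hpos : 0 < 1 + a*c := by nlinarith [ha.1]
    have hin : HasDerivAt (fun a : ℝ => 1 + a*c) c a := by
      simpa using ((hasDerivAt_id a).mul_const c).const_add 1
    have := ((Real.hasDerivAt_log hpos.ne').comp a hin).div_const c
    refine this.congr_deriv (Eq.symm ?_)
    field_simp
  have hint : IntervalIntegrable (fun a => 1/(1 + a*c)) volume 0 1 := by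
    apply ContinuousOn.intervalIntegrable
    apply ContinuousOn.div continuousOn_const
    · exact (continuous_const.add (continuous_id.mul continuous_const)).continuousOn
    · intro a ha
      rw [Set.uIcc_of_le (by norm_num : (0:ℝ) ≤ 1)] at ha
      nlinarith [ha.1]
  rw [intervalIntegral.integral_eq_sub_of_hasDerivAt key hint]
  norm_num

lemma two_arctan (a : ℝ) (ha0 : 0 < a) (ha1 : a < 1) :
    2 * Real.arctan (Real.sqrt ((1-a)/(1+a))) = Real.arccos a := by
  set m := Real.sqrt ((1-a)/(1+a)) with hm_def
  have hfr : (0:ℝ) < (1-a)/(1+a) := div_pos (by linarith) (by linarith)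
  have hm_pos : 0 < m := Real.sqrt_pos.2 hfr
  have hm2 : m^2 = (1-a)/(1+a) := Real.sq_sqrt hfr.le
  have hcos : Real.cos (2 * Real.arctan m) = a := by
    rw [Real.cos_two_mul, Real.cos_arctan]
    rw [div_pow, one_pow, Real.sq_sqrt (by positivity : (0:ℝ) ≤ 1 + m^2)]
    rw [hm2]
    field_simp
    ring
  have h1 : 0 ≤ 2 * Real.arctan m := by
    rw [Real.arctan_eq_arcsin]
    have : (0:ℝ) ≤ m / Real.sqrt (1 + m^2) := div_nonneg hm_pos.le (Real.sqrt_nonneg _)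
    have := Real.arcsin_nonneg.2 this
    linarith
  have h2 : 2 * Real.arctan m ≤ π := by
    nlinarith [Real.arctan_lt_pi_div_two m, Real.pi_pos]
  rw [← hcos, Real.arccos_cos h1 h2]

lemma lemC (a : ℝ) (ha0 : 0 < a) (ha1 : a < 1) :
    ∫ t in (0:ℝ)..1, 1/(Real.sqrt (1-t^2) * (1 + a * Real.sqrt (1-t^2)))
      = Real.arccos a / Real.sqrt (1-a^2) := by
  set m := Real.sqrt ((1-a)/(1+a)) with hm_def
  set q := Real.sqrt (1-a^2) with hq_def
  have hfr : (0:ℝ) < (1-a)/(1+a) := div_pos (by linarith) (by linarith)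
  have hq_pos : 0 < q := Real.sqrt_pos.2 (by nlinarith)
  have hq2 : q^2 = 1-a^2 := Real.sq_sqrt (by nlinarith)
  have hm_pos : 0 < m := Real.sqrt_pos.2 hfr
  have hm2 : m^2 = (1-a)/(1+a) := Real.sq_sqrt hfr.le
  have hm2' : m^2 * (1+a) = 1-a := by
    rw [hm2]; field_simp
  have hqm : m * (1+a) = q := by
    have e : (1:ℝ)-a^2 = (1-a)*(1+a) := by ring
    have hsp : (0:ℝ) < Real.sqrt (1+a) := Real.sqrt_pos.2 (by linarith)
    rw [hm_def, hq_def, e, Real.sqrt_mul (by linarith : (0:ℝ) ≤ 1-a),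
      Real.sqrt_div (by linarith : (0:ℝ) ≤ 1-a), div_mul_eq_mul_div, div_eq_iff hsp.ne',
      mul_assoc, Real.mul_self_sqrt (by linarith : (0:ℝ) ≤ 1+a)]
  set G := fun t : ℝ => (2 / q) * Real.arctan (m * (t / (1 + Real.sqrt (1-t^2)))) with hG_def
  have hGcont : ContinuousOn G (Set.Icc 0 1) := by
    apply Continuous.continuousOn
    apply continuous_const.mul
    apply Real.continuous_arctan.comp
    apply continuous_const.mul
    apply continuous_id.div
    · exact continuous_const.add (continuous_const.sub (continuous_pow 2)).sqrt
    · intro t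
      have := Real.sqrt_nonneg (1 - t^2)
      linarith
  have hGderiv : ∀ t ∈ Set.Ioo (0:ℝ) 1,
      HasDerivWithinAt G (1/(Real.sqrt (1-t^2) * (1 + a * Real.sqrt (1-t^2)))) (Set.Ioi t) t := by
    intro t ht
    obtain ⟨ht0, ht1⟩ := ht
    have hin : 0 < 1 - t^2 := by nlinarith
    set ct := Real.sqrt (1-t^2) with hct_def
    have hct : 0 < ct := Real.sqrt_pos.2 hin
    have hct2 : ct^2 = 1 - t^2 := Real.sq_sqrt hin.le
    have h1 : HasDerivAt (fun t : ℝ => 1 - t^2) (-(2*t)) t := by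
      simpa using (hasDerivAt_pow 2 t).const_sub 1
    have hsq : HasDerivAt (fun t : ℝ => Real.sqrt (1-t^2)) (-t/ct) t := by
      have := (Real.hasDerivAt_sqrt hin.ne').comp t h1
      refine this.congr_deriv (Eq.symm ?_)
      field_simp
      ring
    have hh : HasDerivAt (fun t : ℝ => t / (1 + Real.sqrt (1-t^2)))
        (1/(ct*(1+ct))) t := by
      have hden : (0:ℝ) < 1 + ct := by linarith
      have := (hasDerivAt_id t).div (hsq.const_add 1) hden.ne'
      refine this.congr_deriv (Eq.symm ?_)
      field_simp
      simp only [id_eq]; rw [← hct_def]; linear_combination (-(1+ct)) * hct2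
    have harc := (Real.hasDerivAt_arctan (m * (t / (1 + ct)))).comp t (hh.const_mul m)
    have hfinal := harc.const_mul (2/q)
    apply HasDerivAt.hasDerivWithinAt
    have key2 : (1+a)*((1+ct)^2 + m^2*t^2) = 2*(1+ct)*(1+a*ct) := by
      linear_combination t^2*hm2' + (1-a)*hct2
    refine hfinal.congr_deriv (Eq.symm ?_)
    rw [← hqm]
    field_simp
    linear_combination key2
  have hint : IntervalIntegrable
      (fun t => 1/(Real.sqrt (1-t^2) * (1 + a * Real.sqrt (1-t^2)))) volume 0 1 := by
    refine L1.mono_fun ?_ ?_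
    · apply Measurable.aestronglyMeasurable
      simp only [one_div]
      exact (((continuous_const.sub (continuous_pow 2)).sqrt.measurable).mul
        ((continuous_const.add (continuous_const.mul
          (continuous_const.sub (continuous_pow 2)).sqrt)).measurable)).inv
    · rw [Filter.EventuallyLE, ae_restrict_iff' measurableSet_uIoc]
      refine Filter.Eventually.of_forall (fun t htm => ?_)
      rw [Set.uIoc_of_le (by norm_num : (0:ℝ) ≤ 1)] at htm
      have ht2 : (0:ℝ) ≤ 1 - t^2 := by nlinarith [htm.1, htm.2]
      set ct := Real.sqrt (1-t^2) with hct_def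
      have hct : 0 ≤ ct := Real.sqrt_nonneg _
      have hd : (0:ℝ) < 1 + a*ct := by nlinarith
      rw [Real.norm_eq_abs, Real.norm_eq_abs, abs_of_nonneg (by positivity),
        abs_of_nonneg (by positivity)]
      rcases eq_or_lt_of_le hct with h0 | h0
      · rw [← h0]; simp
      · rw [div_le_div_iff₀ (by positivity) h0]
        nlinarith [mul_nonneg (mul_nonneg ha0.le h0.le) h0.le]
  rw [intervalIntegral.integral_eq_sub_of_hasDeriv_right_of_le (by norm_num) hGcont hGderiv hint]
  have e1 : G 1 = (2/q) * Real.arctan m := by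
    simp [hG_def]
  have e0 : G 0 = 0 := by simp [hG_def]
  rw [e1, e0, sub_zero, ← two_arctan a ha0 ha1]
  ring

lemma lemD : ∫ a in (0:ℝ)..1, Real.arccos a / Real.sqrt (1-a^2) = π^2/8 := by
  have hcont : ContinuousOn (fun a : ℝ => -(Real.arccos a)^2/2) (Set.Icc 0 1) :=
    (((Real.continuous_arccos.pow 2).neg).div_const 2).continuousOn
  have hderiv : ∀ a ∈ Set.Ioo (0:ℝ) 1,
      HasDerivWithinAt (fun a : ℝ => -(Real.arccos a)^2/2)
        (Real.arccos a / Real.sqrt (1-a^2)) (Set.Ioi a) a := by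
    intro a ha
    have hs : 0 < Real.sqrt (1-a^2) := Real.sqrt_pos.2 (by nlinarith [ha.1, ha.2])
    have h := Real.hasDerivAt_arccos (by intro h; rw [h] at ha; linarith [ha.1] : a ≠ -1)
      (ne_of_lt ha.2)
    have := ((h.pow 2).neg).div_const 2
    apply HasDerivAt.hasDerivWithinAt
    refine this.congr_deriv (Eq.symm ?_)
    field_simp
    ring
  have hint : IntervalIntegrable (fun a : ℝ => Real.arccos a / Real.sqrt (1-a^2)) volume 0 1 := by
    refine (L1.const_mul (π/2)).mono_fun ?_ ?_
    · apply Measurable.aestronglyMeasurable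
      exact (Real.continuous_arccos.measurable).div
        ((continuous_const.sub (continuous_pow 2)).sqrt.measurable)
    · rw [Filter.EventuallyLE, ae_restrict_iff' measurableSet_uIoc]
      refine Filter.Eventually.of_forall (fun a ham => ?_)
      rw [Set.uIoc_of_le (by norm_num : (0:ℝ) ≤ 1)] at ham
      have h1 : 0 ≤ Real.arccos a := Real.arccos_nonneg a
      have h2 : Real.arccos a ≤ π/2 := Real.arccos_le_pi_div_two.2 ham.1.le
      have hs : 0 ≤ Real.sqrt (1-a^2) := Real.sqrt_nonneg _
      rw [Real.norm_eq_abs, Real.norm_eq_abs, abs_of_nonneg (by positivity),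
        abs_of_nonneg (by positivity)]
      rw [div_eq_mul_inv, mul_comm (π/2) _, one_div, mul_comm _ (Real.sqrt (1-a^2))⁻¹]
      exact mul_le_mul_of_nonneg_left h2 (by positivity)
  rw [intervalIntegral.integral_eq_sub_of_hasDeriv_right_of_le (by norm_num) hcont hderiv hint]
  rw [Real.arccos_one, Real.arccos_zero]
  ring


/-- The complete elliptic integral of the first kind. -/
noncomputable def ellipticK (k : ℝ) : ℝ :=
  ∫ t in (0:ℝ)..1, 1 / Real.sqrt ((1 - t^2) * (1 - k^2 * t^2))

lemma intOn_inv_sqrt : IntegrableOn (fun x : ℝ => 1/Real.sqrt (1-x^2)) (Set.Ioo 0 1) volume := by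
  have := (intervalIntegrable_iff_integrableOn_Ioc_of_le (by norm_num : (0:ℝ) ≤ 1)).1 L1
  exact this.mono_set Set.Ioo_subset_Ioc_self

/-- `∫₀¹ K(k)/(1+k) dk = π²/8`. -/
theorem integral_ellipticK_div_one_add :
    (∫ k in (0:ℝ)..1, ellipticK k / (1 + k)) = π^2 / 8 := by
  have h01 : (0:ℝ) ≤ 1 := by norm_num
  set μ : Measure ℝ := volume.restrict (Set.Ioo 0 1) with hμ
  set H : ℝ → ℝ → ℝ :=
    fun t k => 1/((1+k)*(Real.sqrt (1-t^2) * Real.sqrt (1-t^2*k^2))) with hH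
  set G2 : ℝ → ℝ → ℝ :=
    fun t a => 1/(Real.sqrt (1-t^2) * (1 + a * Real.sqrt (1-t^2))) with hG2
  have measH : Measurable (Function.uncurry H) := by
    have hcont : Continuous fun p : ℝ × ℝ =>
        (1+p.2)*(Real.sqrt (1-p.1^2) * Real.sqrt (1-p.1^2*p.2^2)) := by fun_prop
    have := hcont.measurable.inv
    convert this using 1; funext p; simp only [Function.uncurry, hH, Pi.inv_apply, one_div]
  have measG2 : Measurable (Function.uncurry G2) := by
    have hcont : Continuous fun p : ℝ × ℝ =>
        Real.sqrt (1-p.1^2) * (1 + p.2 * Real.sqrt (1-p.1^2)) := by fun_prop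
    have := hcont.measurable.inv
    convert this using 1; funext p; simp only [Function.uncurry, hG2, Pi.inv_apply, one_div]
  -- inner integral over k
  have inner_k : ∀ t ∈ Set.Ioo (0:ℝ) 1, (∫ k in Set.Ioo (0:ℝ) 1, H t k)
      = Real.log (1+Real.sqrt (1-t^2))/(1-t^2) := by
    intro t ht
    have hin : 0 < 1 - t^2 := by nlinarith [ht.1, ht.2]
    have hc : 0 < Real.sqrt (1-t^2) := Real.sqrt_pos.2 hin
    have hc2 : Real.sqrt (1-t^2)^2 = 1-t^2 := Real.sq_sqrt hin.le
    have e : Set.EqOn (fun k => H t k)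
        (fun k => (1/Real.sqrt (1-t^2)) * (1/((1+k)*Real.sqrt (1-t^2*k^2))))
        (Set.Ioo 0 1) := by
      intro k hk
      have hs : 0 < Real.sqrt (1-t^2*k^2) := Real.sqrt_pos.2 (by nlinarith [hk.1, hk.2, sq_nonneg (t*k), sq_nonneg t, sq_nonneg k, mul_pos ht.1 hk.1])
      have hk1 : (0:ℝ) < 1 + k := by linarith [hk.1]
      simp only [hH]
      field_simp
    rw [setIntegral_congr_fun measurableSet_Ioo e, MeasureTheory.integral_const_mul,
      ← integral_Ioc_eq_integral_Ioo, ← intervalIntegral.integral_of_le h01,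
      lemA t ht.1.le ht.2]
    rw [← hc2]
    field_simp; simp [Real.sqrt_sq hc.le]
  -- inner integral over a
  have inner_a : ∀ t ∈ Set.Ioo (0:ℝ) 1, (∫ a in Set.Ioo (0:ℝ) 1, G2 t a)
      = Real.log (1+Real.sqrt (1-t^2))/(1-t^2) := by
    intro t ht
    have hin : 0 < 1 - t^2 := by nlinarith [ht.1, ht.2]
    have hc : 0 < Real.sqrt (1-t^2) := Real.sqrt_pos.2 hin
    have hc2 : Real.sqrt (1-t^2)^2 = 1-t^2 := Real.sq_sqrt hin.le
    have e : Set.EqOn (fun a => G2 t a)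
        (fun a => (1/Real.sqrt (1-t^2)) * (1/(1 + a*Real.sqrt (1-t^2))))
        (Set.Ioo 0 1) := by
      intro a ha
      have hd : (0:ℝ) < 1 + a * Real.sqrt (1-t^2) := by nlinarith [ha.1, hc]
      simp only [hG2]
      field_simp
    rw [setIntegral_congr_fun measurableSet_Ioo e, MeasureTheory.integral_const_mul,
      ← integral_Ioc_eq_integral_Ioo, ← intervalIntegral.integral_of_le h01,
      lemB _ hc]
    rw [← hc2]
    field_simp; simp [Real.sqrt_sq hc.le]
  -- inner integral over t
  have inner_t : ∀ a ∈ Set.Ioo (0:ℝ) 1, (∫ t in Set.Ioo (0:ℝ) 1, G2 t a)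
      = Real.arccos a / Real.sqrt (1-a^2) := by
    intro a ha
    rw [← integral_Ioc_eq_integral_Ioo, ← intervalIntegral.integral_of_le h01]
    exact lemC a ha.1 ha.2
  -- nonnegativity
  have Hnn : ∀ t, ∀ k ∈ Set.Ioo (0:ℝ) 1, 0 ≤ H t k := by
    intro t k hk
    apply div_nonneg zero_le_one
    apply mul_nonneg (by linarith [hk.1])
    exact mul_nonneg (Real.sqrt_nonneg _) (Real.sqrt_nonneg _)
  have G2nn : ∀ t, ∀ a ∈ Set.Ioo (0:ℝ) 1, 0 ≤ G2 t a := by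
    intro t a ha
    apply div_nonneg zero_le_one
    exact mul_nonneg (Real.sqrt_nonneg _)
      (by nlinarith [Real.sqrt_nonneg (1-t^2), ha.1])
  -- bound on H
  have Hbd : ∀ t ∈ Set.Ioo (0:ℝ) 1, ∀ k ∈ Set.Ioo (0:ℝ) 1, H t k ≤ 1/(1-t^2) := by
    intro t ht k hk
    have hin : 0 < 1 - t^2 := by nlinarith [ht.1, ht.2]
    have hc : 0 < Real.sqrt (1-t^2) := Real.sqrt_pos.2 hin
    have hc2 : Real.sqrt (1-t^2)^2 = 1-t^2 := Real.sq_sqrt hin.le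
    have hs : Real.sqrt (1-t^2) ≤ Real.sqrt (1-t^2*k^2) := by
      apply Real.sqrt_le_sqrt
      nlinarith [mul_le_mul_of_nonneg_left
        (show k^2 ≤ 1 by nlinarith [hk.1.le, hk.2.le]) (sq_nonneg t)]
    have hden : 1-t^2 ≤ (1+k)*(Real.sqrt (1-t^2) * Real.sqrt (1-t^2*k^2)) := by
      have h1 : Real.sqrt (1-t^2) * Real.sqrt (1-t^2) ≤
          Real.sqrt (1-t^2) * Real.sqrt (1-t^2*k^2) :=
        mul_le_mul_of_nonneg_left hs hc.le
      nlinarith [hk.1, mul_nonneg hc.le (Real.sqrt_nonneg (1-t^2*k^2))]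
    rw [hH]
    exact one_div_le_one_div_of_le hin hden
  -- bound on G2
  have G2bd : ∀ t ∈ Set.Ioo (0:ℝ) 1, ∀ a ∈ Set.Ioo (0:ℝ) 1,
      G2 t a ≤ 1/Real.sqrt (1-t^2) := by
    intro t ht a ha
    have hin : 0 < 1 - t^2 := by nlinarith [ht.1, ht.2]
    have hc : 0 < Real.sqrt (1-t^2) := Real.sqrt_pos.2 hin
    rw [hG2]
    apply one_div_le_one_div_of_le hc
    nlinarith [mul_nonneg (mul_nonneg ha.1.le hc.le) hc.le]
  -- value bound for the common inner value
  have val_bd : ∀ t ∈ Set.Ioo (0:ℝ) 1,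
      Real.log (1+Real.sqrt (1-t^2))/(1-t^2) ≤ 1/Real.sqrt (1-t^2) ∧
      0 ≤ Real.log (1+Real.sqrt (1-t^2))/(1-t^2) := by
    intro t ht
    have hin : 0 < 1 - t^2 := by nlinarith [ht.1, ht.2]
    have hc : 0 < Real.sqrt (1-t^2) := Real.sqrt_pos.2 hin
    have hc2 : Real.sqrt (1-t^2)^2 = 1-t^2 := Real.sq_sqrt hin.le
    have hlog_le : Real.log (1+Real.sqrt (1-t^2)) ≤ Real.sqrt (1-t^2) := by
      have := Real.log_le_sub_one_of_pos (show (0:ℝ) < 1+Real.sqrt (1-t^2) by linarith)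
      linarith
    have hlog_nn : 0 ≤ Real.log (1+Real.sqrt (1-t^2)) :=
      Real.log_nonneg (by linarith)
    constructor
    · rw [div_le_div_iff₀ hin hc]
      nlinarith
    · positivity
  -- integrability of uncurry H
  have intH : Integrable (Function.uncurry H) (μ.prod μ) := by
    rw [MeasureTheory.integrable_prod_iff measH.aestronglyMeasurable]
    constructor
    · filter_upwards [ae_restrict_mem measurableSet_Ioo] with t ht
      have hin : 0 < 1 - t^2 := by nlinarith [ht.1, ht.2]
      apply Integrable.mono' (integrable_const (1/(1-t^2)))
      · exact (measH.comp measurable_prodMk_left).aestronglyMeasurable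
      · filter_upwards [ae_restrict_mem measurableSet_Ioo] with k hk
        simp only [Function.uncurry_apply_pair]
        rw [Real.norm_eq_abs, abs_of_nonneg (Hnn t k hk)]
        exact Hbd t ht k hk
    · apply Integrable.mono' (intOn_inv_sqrt)
      · exact (measH.norm.aestronglyMeasurable).integral_prod_right'
      · filter_upwards [ae_restrict_mem measurableSet_Ioo] with t ht
        have heq : (∫ k, ‖Function.uncurry H (t, k)‖ ∂μ) = ∫ k in Set.Ioo (0:ℝ) 1, H t k := by
          rw [hμ]
          apply setIntegral_congr_fun measurableSet_Ioo
          intro k hk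
          exact norm_of_nonneg (Hnn t k hk)
        rw [Real.norm_eq_abs, heq, inner_k t ht,
          abs_of_nonneg (val_bd t ht).2]
        exact (val_bd t ht).1
  -- integrability of uncurry G2
  have intG2 : Integrable (Function.uncurry G2) (μ.prod μ) := by
    rw [MeasureTheory.integrable_prod_iff measG2.aestronglyMeasurable]
    constructor
    · filter_upwards [ae_restrict_mem measurableSet_Ioo] with t ht
      have hin : 0 < 1 - t^2 := by nlinarith [ht.1, ht.2]
      have hc : 0 < Real.sqrt (1-t^2) := Real.sqrt_pos.2 hin
      apply Integrable.mono' (integrable_const (1/Real.sqrt (1-t^2)))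
      · exact (measG2.comp measurable_prodMk_left).aestronglyMeasurable
      · filter_upwards [ae_restrict_mem measurableSet_Ioo] with a ha
        simp only [Function.uncurry_apply_pair]
        rw [Real.norm_eq_abs, abs_of_nonneg (G2nn t a ha)]
        exact G2bd t ht a ha
    · apply Integrable.mono' (intOn_inv_sqrt)
      · exact (measG2.norm.aestronglyMeasurable).integral_prod_right'
      · filter_upwards [ae_restrict_mem measurableSet_Ioo] with t ht
        have heq : (∫ a, ‖Function.uncurry G2 (t, a)‖ ∂μ) = ∫ a in Set.Ioo (0:ℝ) 1, G2 t a := by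
          rw [hμ]
          apply setIntegral_congr_fun measurableSet_Ioo
          intro a ha
          exact norm_of_nonneg (G2nn t a ha)
        rw [Real.norm_eq_abs, heq, inner_a t ht,
          abs_of_nonneg (val_bd t ht).2]
        exact (val_bd t ht).1
  -- step 2: pointwise identity for the outer integrand
  have step2 : ∀ k ∈ Set.Ioo (0:ℝ) 1,
      ellipticK k / (1+k) = ∫ t in Set.Ioo (0:ℝ) 1, H t k := by
    intro k hk
    rw [ellipticK, intervalIntegral.integral_of_le h01, integral_Ioc_eq_integral_Ioo]
    have e : Set.EqOn (fun t => H t k)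
        (fun t => (1 / Real.sqrt ((1-t^2)*(1-k^2*t^2))) * (1/(1+k)))
        (Set.Ioo 0 1) := by
      intro t ht
      have hin : 0 < 1 - t^2 := by nlinarith [ht.1, ht.2]
      have hs : 0 < 1 - t^2*k^2 := by
        nlinarith [mul_le_mul_of_nonneg_left
          (show k^2 ≤ 1 by nlinarith [hk.1.le, hk.2.le]) (sq_nonneg t)]
      have hc : 0 < Real.sqrt (1-t^2) := Real.sqrt_pos.2 hin
      have hsq : 0 < Real.sqrt (1-t^2*k^2) := Real.sqrt_pos.2 hs
      have hk1 : (0:ℝ) < 1 + k := by linarith [hk.1]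
      simp only [hH]
      rw [show (1:ℝ)-k^2*t^2 = 1-t^2*k^2 by ring,
        Real.sqrt_mul hin.le]
      field_simp
    rw [setIntegral_congr_fun measurableSet_Ioo e, MeasureTheory.integral_mul_const]
    ring
  -- the chain
  calc (∫ k in (0:ℝ)..1, ellipticK k / (1 + k))
      = ∫ k in Set.Ioo (0:ℝ) 1, ellipticK k / (1+k) := by
        rw [intervalIntegral.integral_of_le h01, integral_Ioc_eq_integral_Ioo]
    _ = ∫ k in Set.Ioo (0:ℝ) 1, ∫ t in Set.Ioo (0:ℝ) 1, H t k :=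
        setIntegral_congr_fun measurableSet_Ioo step2
    _ = ∫ t in Set.Ioo (0:ℝ) 1, ∫ k in Set.Ioo (0:ℝ) 1, H t k :=
        (integral_integral_swap intH).symm
    _ = ∫ t in Set.Ioo (0:ℝ) 1, Real.log (1+Real.sqrt (1-t^2))/(1-t^2) :=
        setIntegral_congr_fun measurableSet_Ioo inner_k
    _ = ∫ t in Set.Ioo (0:ℝ) 1, ∫ a in Set.Ioo (0:ℝ) 1, G2 t a :=
        setIntegral_congr_fun measurableSet_Ioo (fun t ht => (inner_a t ht).symm)
    _ = ∫ a in Set.Ioo (0:ℝ) 1, ∫ t in Set.Ioo (0:ℝ) 1, G2 t a :=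
        integral_integral_swap intG2
    _ = ∫ a in Set.Ioo (0:ℝ) 1, Real.arccos a / Real.sqrt (1-a^2) :=
        setIntegral_congr_fun measurableSet_Ioo inner_t
    _ = ∫ a in (0:ℝ)..1, Real.arccos a / Real.sqrt (1-a^2) := by
        rw [intervalIntegral.integral_of_le h01, integral_Ioc_eq_integral_Ioo]
    _ = π^2/8 := lemD
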